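/- Let D be a finite DAG with vertices partitioned into sources S, internal vertices I, and sinks T, and let σ be any total elimination sequence. For every internal vertex k, the cost paid when k is eliminated (its Markowitz degree at that moment) is at least c(S,k) · c(k,T), where c(S,k) is the minimum size of a vertex set not containing k whose removal disconnects all directed paths from S to k, and c(k,T) is defined symmetrically for paths from k to T. -/

import Mathlib

variable {V : Type*} [DecidableEq V] [Fintype V]

/-- In-neighborhood of `v` in the edge set `E`. -/
def inN (E : Finset (V × V)) (v : V) : Finset V :=
  (E.filter fun p => p.2 = v).image Prod.fst

/-- Out-neighborhood of `v` in the edge set `E`. -/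
def outN (E : Finset (V × V)) (v : V) : Finset V :=
  (E.filter fun p => p.1 = v).image Prod.snd

/-- Elimination of vertex `v`: delete `v` and add an edge from every in-neighbor
to every out-neighbor of `v` (if not already present). -/
def elimv (E : Finset (V × V)) (v : V) : Finset (V × V) :=
  (E ∪ (inN E v) ×ˢ (outN E v)).filter fun p => p.1 ≠ v ∧ p.2 ≠ v

/-- Eliminate a sequence of vertices, in order. -/
def elimSeq (E : Finset (V × V)) (σ : List V) : Finset (V × V) :=
  σ.foldl elimv E

/-- Markowitz degree of `v`: in-degree times out-degree. -/
def mark (E : Finset (V × V)) (v : V) : ℕ :=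
  (inN E v).card * (outN E v).card

/-- Cost of an elimination sequence: sum of the Markowitz degrees at the
time of each elimination. -/
def cost (E : Finset (V × V)) : List V → ℕ
  | [] => 0
  | v :: σ => mark E v + cost (elimv E v) σ

/-- The directed graph with edge set `E` is acyclic. -/
def Acyclic (E : Finset (V × V)) : Prop :=
  ∀ v : V, ¬ Relation.TransGen (fun a b => (a, b) ∈ E) v v

/-- `E` is an acyclic digraph whose vertices are partitioned into sources `S`
(no in-edges), internal vertices `I`, and sinks `T` (no out-edges). -/
def IsDAGPartition (E : Finset (V × V)) (S I T : Finset V) : Prop :=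
  Acyclic E ∧ Disjoint S I ∧ Disjoint S T ∧ Disjoint I T ∧
    S ∪ I ∪ T = Finset.univ ∧ (∀ s ∈ S, inN E s = ∅) ∧ (∀ t ∈ T, outN E t = ∅)

/-- There is a directed path from `i` to `j` all of whose internal vertices
lie in `X` (the single-edge path has no internal vertices). -/
def PathThrough (E : Finset (V × V)) (X : Finset V) (i j : V) : Prop :=
  ∃ l : List V, (∀ v ∈ l, v ∈ X) ∧ List.Chain' (fun a b => (a, b) ∈ E) (i :: (l ++ [j]))

/-- A directed path from `i` to `j` whose internal vertices are `l`. -/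
def IsPath (E : Finset (V × V)) (i j : V) (l : List V) : Prop :=
  List.Chain' (fun a b => (a, b) ∈ E) (i :: (l ++ [j]))

/-- `C` is a vertex set not containing `k` meeting every directed path from
`S` to `k`. -/
def SepStoK (E : Finset (V × V)) (S : Finset V) (k : V) (C : Finset V) : Prop :=
  k ∉ C ∧ ∀ s ∈ S, ∀ l : List V, IsPath E s k l → s ∈ C ∨ ∃ v ∈ l, v ∈ C

/-- `C` is a vertex set not containing `k` meeting every directed path from
`k` to `T`. -/
def SepKtoT (E : Finset (V × V)) (T : Finset V) (k : V) (C : Finset V) : Prop :=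
  k ∉ C ∧ ∀ t ∈ T, ∀ l : List V, IsPath E k t l → t ∈ C ∨ ∃ v ∈ l, v ∈ C

/-- Minimum size of a vertex set separating `S` from `k`. -/
noncomputable def cStoK (E : Finset (V × V)) (S : Finset V) (k : V) : ℕ :=
  sInf {n : ℕ | ∃ C : Finset V, SepStoK E S k C ∧ C.card = n}

/-- Minimum size of a vertex set separating `k` from `T`. -/
noncomputable def cKtoT (E : Finset (V × V)) (T : Finset V) (k : V) : ℕ :=
  sInf {n : ℕ | ∃ C : Finset V, SepKtoT E T k C ∧ C.card = n}

section AuxMarkowitz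

variable {V : Type*} [DecidableEq V] [Fintype V]

lemma mem_inN' {E : Finset (V × V)} {v a : V} : a ∈ inN E v ↔ (a, v) ∈ E := by
  constructor
  · intro h
    simp only [inN, Finset.mem_image, Finset.mem_filter] at h
    obtain ⟨p, ⟨hp, h2⟩, h1⟩ := h
    have : p = (a, v) := Prod.ext h1 h2
    rwa [this] at hp
  · intro h
    simp only [inN, Finset.mem_image, Finset.mem_filter]
    exact ⟨(a, v), ⟨h, rfl⟩, rfl⟩

lemma mem_outN' {E : Finset (V × V)} {v a : V} : a ∈ outN E v ↔ (v, a) ∈ E := by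
  constructor
  · intro h
    simp only [outN, Finset.mem_image, Finset.mem_filter] at h
    obtain ⟨p, ⟨hp, h2⟩, h1⟩ := h
    have : p = (v, a) := Prod.ext h2 h1
    rwa [this] at hp
  · intro h
    simp only [outN, Finset.mem_image, Finset.mem_filter]
    exact ⟨(v, a), ⟨h, rfl⟩, rfl⟩

lemma mem_elimv' {E : Finset (V × V)} {v a b : V} :
    (a, b) ∈ elimv E v ↔ ((a, b) ∈ E ∨ ((a, v) ∈ E ∧ (v, b) ∈ E)) ∧ a ≠ v ∧ b ≠ v := by
  simp only [elimv, Finset.mem_filter, Finset.mem_union, Finset.mem_product, mem_inN', mem_outN']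

lemma chain_lift {E : Finset (V × V)} {v : V} :
    ∀ (L : List V), (∀ x ∈ L, x ≠ v) → L.Chain' (fun a b => (a, b) ∈ E) →
      L.Chain' (fun a b => (a, b) ∈ elimv E v)
  | [], _, _ => List.IsChain.nil
  | [x], _, _ => List.IsChain.singleton x
  | x :: y :: t, hne, hch => by
      unfold List.Chain' at hch ⊢
      rw [List.isChain_cons_cons] at hch ⊢
      refine ⟨?_, chain_lift (y :: t) (fun a ha => hne a (List.mem_cons_of_mem _ ha)) hch.2⟩
      exact mem_elimv'.mpr ⟨Or.inl hch.1, hne x (by simp), hne y (by simp)⟩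

lemma transGen_of_chain {R : V → V → Prop} :
    ∀ (l : List V) (x : V), List.Chain R x l → ∀ y ∈ l, Relation.TransGen R x y
  | z :: t, x, h, y, hy => by
      unfold List.Chain at h
      rw [List.isChain_cons_cons] at h
      rcases List.mem_cons.mp hy with hy | hy
      · exact hy ▸ Relation.TransGen.single h.1
      · exact (Relation.TransGen.single h.1).trans (transGen_of_chain t z h.2 y hy)

lemma exists_first_split {p : V → Prop} :
    ∀ (l : List V), (¬ ∀ x ∈ l, p x) →
      ∃ l1 u l2, l = l1 ++ u :: l2 ∧ (∀ x ∈ l1, p x) ∧ ¬ p u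
  | [], h => absurd (by simp) h
  | x :: t, h => by
      by_cases hx : p x
      · have ht : ¬ ∀ y ∈ t, p y := fun ha => h (by
          intro y hy
          rcases List.mem_cons.mp hy with hy | hy
          · exact hy ▸ hx
          · exact ha y hy)
        obtain ⟨l1, u, l2, rfl, h1, h2⟩ := exists_first_split t ht
        exact ⟨x :: l1, u, l2, rfl, by
          intro y hy
          rcases List.mem_cons.mp hy with hy | hy
          · exact hy ▸ hx
          · exact h1 y hy, h2⟩
      · exact ⟨[], x, t, rfl, by simp, hx⟩

lemma exists_last_split {p : V → Prop} :
    ∀ (l : List V), (¬ ∀ x ∈ l, p x) →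
      ∃ l1 u l2, l = l1 ++ u :: l2 ∧ ¬ p u ∧ (∀ x ∈ l2, p x)
  | [], h => absurd (by simp) h
  | x :: t, h => by
      by_cases ht : ∀ y ∈ t, p y
      · have hx : ¬ p x := fun hx => h (by
          intro y hy
          rcases List.mem_cons.mp hy with hy | hy
          · exact hy ▸ hx
          · exact ht y hy)
        exact ⟨[], x, t, rfl, hx, ht⟩
      · obtain ⟨l1, u, l2, rfl, h1, h2⟩ := exists_last_split t ht
        exact ⟨x :: l1, u, l2, rfl, h1, h2⟩

lemma mem_split_first {v : V} {l : List V} (h : v ∈ l) :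
    ∃ l1 l2, l = l1 ++ v :: l2 ∧ v ∉ l1 := by
  have : ¬ ∀ x ∈ l, x ≠ v := fun ha => ha v h rfl
  obtain ⟨l1, u, l2, rfl, h1, h2⟩ := exists_first_split l this
  have huv : u = v := not_not.mp h2
  exact ⟨l1, l2, by rw [huv], fun hv => h1 v hv rfl⟩

lemma elimv_sound {E : Finset (V × V)} {v a b : V} (h : (a, b) ∈ elimv E v) :
    Relation.TransGen (fun x y => (x, y) ∈ E) a b := by
  rcases (mem_elimv'.mp h).1 with h | ⟨h1, h2⟩
  · exact Relation.TransGen.single h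
  · exact (Relation.TransGen.single h1).trans (Relation.TransGen.single h2)

lemma acyclic_elimv {E : Finset (V × V)} (h : Acyclic E) (v : V) : Acyclic (elimv E v) := by
  intro x hx
  apply h x
  have := Relation.TransGen.mono (fun a b hab => elimv_sound hab) x x hx
  rwa [Relation.transGen_idem] at this

lemma elimv_complete {E : Finset (V × V)} (hA : Acyclic E) {v a b : V}
    (ha : a ≠ v) (hb : b ≠ v) {l : List V} (h : IsPath E a b l) :
    ∃ l' : List V, (∀ x ∈ l', x ∈ l ∧ x ≠ v) ∧ IsPath (elimv E v) a b l' := by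
  by_cases hv : v ∈ l
  · obtain ⟨l1, l2, rfl, hv1⟩ := mem_split_first hv
    have heq : a :: ((l1 ++ v :: l2) ++ [b]) = (a :: l1) ++ (v :: (l2 ++ [b])) := by simp
    have hfull : List.Chain' (fun x y => (x, y) ∈ E) ((a :: l1) ++ (v :: (l2 ++ [b]))) := by
      rw [← heq]; exact h
    unfold List.Chain' at hfull
    rw [List.isChain_append] at hfull
    obtain ⟨hc1, hc2, hmid⟩ := hfull
    -- v ∉ l2 by acyclicity
    have hchainv : List.Chain (fun x y => (x, y) ∈ E) v (l2 ++ [b]) := hc2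
    have hv2 : v ∉ l2 := by
      intro hvl2
      exact hA v (transGen_of_chain _ v hchainv v (List.mem_append_left _ hvl2))
    -- edge from last of a::l1 into v
    have hgl : (a :: l1).getLast? = some ((a :: l1).getLast (by simp)) :=
      List.getLast?_eq_getLast (by simp)
    have hhd : (l2 ++ [b]).head? = some ((l2 ++ [b]).head (by simp)) :=
      List.head?_eq_head (by simp)
    have hlastv : ((a :: l1).getLast (by simp), v) ∈ E :=
      hmid _ (by rw [hgl]; rfl) v rfl
    -- edge from v to head of l2 ++ [b]
    have hc2' : List.Chain' (fun x y => (x, y) ∈ E) (l2 ++ [b]) := hc2.tail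
    have hheadv : (v, (l2 ++ [b]).head (by simp)) ∈ E := by
      rcases List.isChain_cons.mp hc2 with ⟨hh, _⟩
      exact hh _ hhd
    have hne1 : ∀ x ∈ a :: l1, x ≠ v := by
      intro x hx
      rcases List.mem_cons.mp hx with hx | hx
      · exact hx ▸ ha
      · exact fun hxv => hv1 (hxv ▸ hx)
    have hne2 : ∀ x ∈ l2 ++ [b], x ≠ v := by
      intro x hx
      rcases List.mem_append.mp hx with hx | hx
      · exact fun hxv => hv2 (hxv ▸ hx)
      · simp at hx; exact hx ▸ hb
    refine ⟨l1 ++ l2, ?_, ?_⟩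
    · intro x hx
      rcases List.mem_append.mp hx with hx | hx
      · exact ⟨List.mem_append_left _ hx, fun hxv => hv1 (hxv ▸ hx)⟩
      · exact ⟨List.mem_append_right _ (List.mem_cons_of_mem _ hx), fun hxv => hv2 (hxv ▸ hx)⟩
    · show List.Chain' _ (a :: ((l1 ++ l2) ++ [b]))
      have heq2 : a :: ((l1 ++ l2) ++ [b]) = (a :: l1) ++ (l2 ++ [b]) := by simp
      rw [heq2]
      unfold List.Chain'
      rw [List.isChain_append]
      refine ⟨chain_lift _ hne1 hc1, chain_lift _ hne2 hc2', ?_⟩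
      intro x hx y hy
      rw [hgl, Option.mem_some_iff] at hx
      rw [hhd, Option.mem_some_iff] at hy
      subst hx
      subst hy
      refine mem_elimv'.mpr ⟨Or.inr ⟨hlastv, hheadv⟩, ?_, ?_⟩
      · exact hne1 _ (List.getLast_mem _)
      · exact hne2 _ (List.head_mem _)
  · refine ⟨l, fun x hx => ⟨hx, fun hxv => hv (hxv ▸ hx)⟩, ?_⟩
    apply chain_lift _ _ h
    intro x hx
    rcases List.mem_cons.mp hx with hx | hx
    · exact hx ▸ ha
    · rcases List.mem_append.mp hx with hx | hx
      · exact fun hxv => hv (hxv ▸ hx)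
      · simp at hx; exact hx ▸ hb

lemma acyclic_elimSeq {E : Finset (V × V)} (h : Acyclic E) :
    ∀ σ : List V, ∀ E' : Finset (V × V), Acyclic E' → Acyclic (elimSeq E' σ)
  | [], _, h' => h'
  | v :: σ, E', h' => acyclic_elimSeq h σ (elimv E' v) (acyclic_elimv h' v)

lemma elimSeq_complete :
    ∀ (σ : List V) (E : Finset (V × V)), Acyclic E →
      ∀ a b : V, a ∉ σ → b ∉ σ → ∀ l : List V, (∀ x ∈ l, x ∈ σ) → IsPath E a b l →
        (a, b) ∈ elimSeq E σ
  | [], E, _, a, b, _, _, l, hl, hp => by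
      have hln : l = [] := List.eq_nil_iff_forall_not_mem.mpr
        (fun x hx => List.not_mem_nil (hl x hx))
      subst hln
      have : List.Chain' (fun x y => (x, y) ∈ E) [a, b] := hp
      unfold List.Chain' at this
      rw [List.isChain_cons_cons] at this
      exact this.1
  | v :: σ, E, hA, a, b, ha, hb, l, hl, hp => by
      have ha' : a ≠ v := fun h => ha (h ▸ List.mem_cons_self)
      have hb' : b ≠ v := fun h => hb (h ▸ List.mem_cons_self)
      obtain ⟨l', hl', hp'⟩ := elimv_complete hA ha' hb' hp
      refine elimSeq_complete σ (elimv E v) (acyclic_elimv hA v) a b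
        (fun h => ha (List.mem_cons_of_mem _ h)) (fun h => hb (List.mem_cons_of_mem _ h))
        l' ?_ hp'
      intro x hx
      obtain ⟨hx1, hx2⟩ := hl' x hx
      rcases List.mem_cons.mp (hl x hx1) with h | h
      · exact absurd h hx2
      · exact h

end AuxMarkowitz

/-- in every total elimination sequence, the cost paid when `k`
is eliminated is at least `c(S,k) · c(k,T)`. -/
theorem markowitz_ge_separator_product (E : Finset (V × V)) (S I T : Finset V)
    (hD : IsDAGPartition E S I T) (k : V) (hk : k ∈ I)
    (σ₁ σ₂ : List V) (hσ : (σ₁ ++ k :: σ₂).Nodup)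
    (hσI : (σ₁ ++ k :: σ₂).toFinset = I) :
    cStoK E S k * cKtoT E T k ≤ mark (elimSeq E σ₁) k := by
  obtain ⟨hA, hSI, hST, hIT, hU, hS, hT⟩ := hD
  have hA₁ : Acyclic (elimSeq E σ₁) := acyclic_elimSeq hA σ₁ E hA
  have hknσ : k ∉ σ₁ := by
    rw [List.nodup_append] at hσ
    exact fun h => hσ.2.2 k h k List.mem_cons_self rfl
  have hσ₁I : ∀ x ∈ σ₁, x ∈ I := by
    intro x hx
    rw [← hσI, List.mem_toFinset]
    exact List.mem_append_left _ hx
  have hsσ : ∀ s ∈ S, s ∉ σ₁ := fun s hs h =>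
    Finset.disjoint_left.mp hSI hs (hσ₁I _ h)
  have htσ : ∀ t ∈ T, t ∉ σ₁ := fun t ht h =>
    Finset.disjoint_left.mp hIT (hσ₁I _ h) ht
  have sep1 : SepStoK E S k (inN (elimSeq E σ₁) k) := by
    refine ⟨fun h => hA₁ k (Relation.TransGen.single (mem_inN'.mp h)), ?_⟩
    intro s hs l hp
    by_cases hall : ∀ x ∈ l, x ∈ σ₁
    · left
      exact mem_inN'.mpr (elimSeq_complete σ₁ E hA s k (hsσ s hs) hknσ l hall hp)
    · obtain ⟨l1, u, l2, rfl, hu, hl2⟩ := exists_last_split l hall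
      right
      refine ⟨u, by simp, ?_⟩
      have hsuff : IsPath E u k l2 := by
        refine List.IsChain.suffix hp ⟨s :: l1, by simp⟩
      exact mem_inN'.mpr (elimSeq_complete σ₁ E hA u k hu hknσ l2 hl2 hsuff)
  have sep2 : SepKtoT E T k (outN (elimSeq E σ₁) k) := by
    refine ⟨fun h => hA₁ k (Relation.TransGen.single (mem_outN'.mp h)), ?_⟩
    intro t ht l hp
    by_cases hall : ∀ x ∈ l, x ∈ σ₁
    · left
      exact mem_outN'.mpr (elimSeq_complete σ₁ E hA k t hknσ (htσ t ht) l hall hp)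
    · obtain ⟨l1, u, l2, rfl, hl1, hu⟩ := exists_first_split l hall
      right
      refine ⟨u, by simp, ?_⟩
      have hpre : IsPath E k u l1 := by
        refine List.IsChain.prefix hp ⟨l2 ++ [t], by simp⟩
      exact mem_outN'.mpr (elimSeq_complete σ₁ E hA k u hknσ hu l1 hl1 hpre)
  have h1 : cStoK E S k ≤ (inN (elimSeq E σ₁) k).card :=
    Nat.sInf_le ⟨inN (elimSeq E σ₁) k, sep1, rfl⟩
  have h2 : cKtoT E T k ≤ (outN (elimSeq E σ₁) k).card :=
    Nat.sInf_le ⟨outN (elimSeq E σ₁) k, sep2, rfl⟩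
  exact Nat.mul_le_mul h1 h2
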